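/- (Equivalence of the IP model and the height-profile reformulation.) The minimum of obj(x) over all integral points x of the polytope Q equals the minimum of the profile cost over all pairs consisting of a barrier height profile hb and a family of dike height profiles (hd)_{d∈D}. Both minima are over nonempty finite sets and hence attained. -/
import Mathlib


open Finset

/-- A point of the LP relaxation: `CY t d h1 h2`, `B t g1 g2`, `DY t d h g`,
with times in `Fin (T+1)`, dike heights in `Fin n`, barrier heights in `Fin m`. -/
structure DikePoint (T n m : ℕ) (D : Type) where
  CY : Fin (T + 1) → D → Fin n → Fin n → ℝ
  B : Fin (T + 1) → Fin m → Fin m → ℝ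
  DY : Fin (T + 1) → D → Fin n → Fin m → ℝ

/-- Membership in the polytope `Q`: box constraints, support only on
nondecreasing height pairs, initial conditions, flow conservation, and the
linking constraints. -/
def memQ {T n m : ℕ} {D : Type} [Fintype D] [NeZero n] [NeZero m]
    (x : DikePoint T n m D) : Prop :=
  (∀ t d h1 h2, x.CY t d h1 h2 ∈ Set.Icc (0 : ℝ) 1) ∧
  (∀ t g1 g2, x.B t g1 g2 ∈ Set.Icc (0 : ℝ) 1) ∧
  (∀ t d h g, x.DY t d h g ∈ Set.Icc (0 : ℝ) 1) ∧
  (∀ t d h1 h2, ¬ h1 ≤ h2 → x.CY t d h1 h2 = 0) ∧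
  (∀ t g1 g2, ¬ g1 ≤ g2 → x.B t g1 g2 = 0) ∧
  (∀ d, x.CY 0 d 0 0 = 1) ∧
  (∀ d h1 h2, 0 < h2 → x.CY 0 d h1 h2 = 0) ∧
  (x.B 0 0 0 = 1) ∧
  (∀ g1 g2, 0 < g2 → x.B 0 g1 g2 = 0) ∧
  (∀ (t : Fin T) (d : D) (h : Fin n),
    ∑ h1 ∈ Iic h, x.CY t.castSucc d h1 h = ∑ h3 ∈ Ici h, x.CY t.succ d h h3) ∧
  (∀ t d (h : Fin n), ∑ h1 ∈ Iic h, x.CY t d h1 h = ∑ g : Fin m, x.DY t d h g) ∧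
  (∀ (t : Fin T) (g : Fin m),
    ∑ g1 ∈ Iic g, x.B t.castSucc g1 g = ∑ g3 ∈ Ici g, x.B t.succ g g3) ∧
  (∀ t (d : D) (g : Fin m), ∑ g1 ∈ Iic g, x.B t g1 g = ∑ h : Fin n, x.DY t d h g)

/-- A point is integral if every coordinate is `0` or `1`. -/
def isIntegral {T n m : ℕ} {D : Type} (x : DikePoint T n m D) : Prop :=
  (∀ t d h1 h2, x.CY t d h1 h2 = 0 ∨ x.CY t d h1 h2 = 1) ∧
  (∀ t g1 g2, x.B t g1 g2 = 0 ∨ x.B t g1 g2 = 1) ∧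
  (∀ t d h g, x.DY t d h g = 0 ∨ x.DY t d h g = 1)

/-- The linear objective function of the LP relaxation. -/
def obj {T n m : ℕ} {D : Type} [Fintype D]
    (Dcost : Fin (T + 1) → D → Fin n → Fin n → ℝ)
    (Dexp : Fin (T + 1) → D → Fin n → Fin m → ℝ)
    (Bcost : Fin (T + 1) → Fin m → Fin m → ℝ)
    (Bexp : Fin (T + 1) → Fin m → ℝ)
    (x : DikePoint T n m D) : ℝ :=
  (∑ t, ∑ d, ∑ h2, ∑ h1 ∈ Iic h2, Dcost t d h1 h2 * x.CY t d h1 h2) +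
  (∑ t, ∑ d, ∑ h, ∑ g, Dexp t d h g * x.DY t d h g) +
  (∑ t, ∑ g2, ∑ g1 ∈ Iic g2, (Bcost t g1 g2 + Bexp t g2) * x.B t g1 g2)

/-- Condition (i). -/
def condI {T n m : ℕ} {D : Type}
    (Dexp : Fin (T + 1) → D → Fin n → Fin m → ℝ) : Prop :=
  ∀ (t : Fin (T + 1)) (d : D) (h h' : Fin n) (g g' : Fin m), h ≤ h' → g ≤ g' →
    Dexp t d h g + Dexp t d h' g' ≤ Dexp t d h' g + Dexp t d h g'

/-- Condition (ii). -/
def condII {T m : ℕ}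
    (Bcost : Fin (T + 1) → Fin m → Fin m → ℝ) : Prop :=
  ∀ (t : Fin (T + 1)) (g1 g1' g2 g2' : Fin m), g1 ≤ g1' → g1' ≤ g2 → g2 ≤ g2' →
    Bcost t g1 g2 + Bcost t g1' g2' ≤ Bcost t g1 g2' + Bcost t g1' g2

/-- Condition (iii). -/
def condIII {T n : ℕ} {D : Type}
    (Dcost : Fin (T + 1) → D → Fin n → Fin n → ℝ) : Prop :=
  ∀ (t : Fin (T + 1)) (d : D) (h1 h1' h2 h2' : Fin n), h1 ≤ h1' → h1' ≤ h2 → h2 ≤ h2' →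
    Dcost t d h1 h2 + Dcost t d h1' h2' ≤ Dcost t d h1 h2' + Dcost t d h1' h2

/-- The value of a height profile at the previous time step, with value `z`
at "time −1" (i.e. when `t = 0`). -/
def prevH {k : ℕ} {α : Type} (f : Fin (k + 1) → α) (z : α) (t : Fin (k + 1)) : α :=
  if (t : ℕ) = 0 then z else f ⟨(t : ℕ) - 1, by have := t.isLt; omega⟩

/-- The total cost of a family of dike height profiles `hd` together with a
barrier height profile `hb` (profiles extended by value `0` at time `−1`). -/
noncomputable def profileCost {T n m : ℕ} {D : Type} [Fintype D] [NeZero n] [NeZero m]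
    (Dcost : Fin (T + 1) → D → Fin n → Fin n → ℝ)
    (Dexp : Fin (T + 1) → D → Fin n → Fin m → ℝ)
    (Bcost : Fin (T + 1) → Fin m → Fin m → ℝ)
    (Bexp : Fin (T + 1) → Fin m → ℝ)
    (hd : D → Fin (T + 1) → Fin n) (hb : Fin (T + 1) → Fin m) : ℝ :=
  ∑ t, (Bcost t (prevH hb 0 t) (hb t) + Bexp t (hb t) +
    ∑ d, (Dcost t d (prevH (hd d) 0 t) (hd d t) + Dexp t d (hd d t) (hb t)))

/-- The 0-1 point of the polytope associated with a family of dike height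
profiles and a barrier height profile. -/
noncomputable def profilePoint {T n m : ℕ} {D : Type} [NeZero n] [NeZero m]
    (hd : D → Fin (T + 1) → Fin n) (hb : Fin (T + 1) → Fin m) :
    DikePoint T n m D where
  CY := fun t d h1 h2 => if h1 = prevH (hd d) 0 t ∧ h2 = hd d t then 1 else 0
  B := fun t g1 g2 => if g1 = prevH hb 0 t ∧ g2 = hb t then 1 else 0
  DY := fun t d h g => if h = hd d t ∧ g = hb t then 1 else 0


section Aux

lemma prevH_zero {k : ℕ} {α : Type} (f : Fin (k + 1) → α) (z : α) :
    prevH f z 0 = z := by simp [prevH]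

lemma prevH_succ {k : ℕ} {α : Type} (f : Fin (k + 1) → α) (z : α) (s : Fin k) :
    prevH f z s.succ = f s.castSucc := by
  simp only [prevH, Fin.val_succ]
  rw [if_neg (by omega)]
  congr 1

lemma prevH_le {k n : ℕ} [NeZero n] (f : Fin (k + 1) → Fin n) (hf : Monotone f)
    (h0 : f 0 = 0) (t : Fin (k + 1)) : prevH f 0 t ≤ f t := by
  unfold prevH
  split
  · rw [← h0]; exact hf (Fin.zero_le t)
  · exact hf (by simp [Fin.le_def])

lemma exists_unique_one {α : Type*} [DecidableEq α] (s : Finset α) (f : α → ℝ)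
    (h01 : ∀ a ∈ s, f a = 0 ∨ f a = 1) (hsum : ∑ a ∈ s, f a = 1) :
    ∃ a ∈ s, f a = 1 ∧ ∀ b ∈ s, b ≠ a → f b = 0 := by
  have hne : ∃ a ∈ s, f a ≠ 0 := by
    by_contra h
    push_neg at h
    rw [Finset.sum_eq_zero h] at hsum
    norm_num at hsum
  obtain ⟨a, ha, hfa⟩ := hne
  have hfa1 : f a = 1 := (h01 a ha).resolve_left hfa
  refine ⟨a, ha, hfa1, ?_⟩
  have herase : ∑ b ∈ s.erase a, f b = 0 := by
    have h2 := Finset.add_sum_erase s f ha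
    rw [hsum, hfa1] at h2
    linarith
  intro b hb hba
  have hnn : ∀ x ∈ s.erase a, 0 ≤ f x := fun x hx => by
    rcases h01 x (Finset.mem_of_mem_erase hx) with h | h <;> simp [h]
  exact (Finset.sum_eq_zero_iff_of_nonneg hnn).1 herase b (Finset.mem_erase.2 ⟨hba, hb⟩)

lemma rowsum_one {n : ℕ} [NeZero n] (cc : Fin n → Fin n → ℝ) (p : Fin n × Fin n)
    (hple : p.1 ≤ p.2) (hp : ∀ h1 h2, cc h1 h2 = if (h1, h2) = p then 1 else 0) :
    ∑ h1 ∈ Iic p.2, cc h1 p.2 = 1 := by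
  rw [Finset.sum_congr rfl (fun h1 _ => hp h1 p.2)]
  have hrow : ∀ h1 : Fin n, (if (h1, p.2) = p then (1:ℝ) else 0) =
      if h1 = p.1 then 1 else 0 := by
    intro h1; by_cases h : h1 = p.1
    · subst h; rw [if_pos rfl, if_pos (by simp [Prod.ext_iff])]
    · rw [if_neg h, if_neg (by simp [Prod.ext_iff, h])]
  rw [Finset.sum_congr rfl (fun h1 _ => hrow h1), Finset.sum_ite_eq' (Iic p.2) p.1,
    if_pos (mem_Iic.2 hple)]

/-- Extraction of a height profile from an integral unit flow. -/
lemma extract {T n : ℕ} [NeZero n] (c : Fin (T+1) → Fin n → Fin n → ℝ)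
    (h01 : ∀ t h1 h2, c t h1 h2 = 0 ∨ c t h1 h2 = 1)
    (hsupp : ∀ t h1 h2, ¬ h1 ≤ h2 → c t h1 h2 = 0)
    (hinit : c 0 0 0 = 1)
    (hinit0 : ∀ h1 h2, 0 < h2 → c 0 h1 h2 = 0)
    (hflow : ∀ (t : Fin T) (h : Fin n),
      ∑ h1 ∈ Iic h, c t.castSucc h1 h = ∑ h3 ∈ Ici h, c t.succ h h3) :
    ∃ f : Fin (T+1) → Fin n, Monotone f ∧ f 0 = 0 ∧
      ∀ t h1 h2, c t h1 h2 = if h1 = prevH f 0 t ∧ h2 = f t then 1 else 0 := by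
  classical
  have key : ∀ t : Fin (T+1), ∃ p : Fin n × Fin n, p.1 ≤ p.2 ∧
      ∀ h1 h2, c t h1 h2 = if (h1, h2) = p then 1 else 0 := by
    intro t
    induction t using Fin.induction with
    | zero =>
      refine ⟨(0, 0), le_refl _, fun h1 h2 => ?_⟩
      by_cases hh2 : h2 = 0
      · subst hh2
        by_cases hh1 : h1 = 0
        · subst hh1; rw [if_pos rfl]; exact hinit
        · rw [if_neg (by simp [Prod.ext_iff, hh1]),
            hsupp 0 h1 0 (fun h => hh1 (Fin.le_zero_iff'.mp h))]
      · rw [if_neg (by simp [Prod.ext_iff, hh2]),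
          hinit0 h1 h2 (lt_of_le_of_ne (Fin.zero_le _) (Ne.symm hh2))]
    | succ s ih =>
      obtain ⟨p, hple, hp⟩ := ih
      have hL : ∑ h3 ∈ Ici p.2, c s.succ p.2 h3 = 1 := by
        rw [← hflow s p.2]; exact rowsum_one _ p hple hp
      have hrow0 : ∀ h : Fin n, h ≠ p.2 → ∀ h3, c s.succ h h3 = 0 := by
        intro h hne h3
        by_cases hle : h ≤ h3
        · have hL0 : ∑ h1 ∈ Iic h, c s.castSucc h1 h = 0 :=
            Finset.sum_eq_zero (fun h1 _ => by
              rw [hp]; exact if_neg (fun q => hne (congrArg Prod.snd q)))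
          have hR0 : ∑ h3 ∈ Ici h, c s.succ h h3 = 0 := by rw [← hflow s h, hL0]
          have hnn : ∀ x ∈ Ici h, 0 ≤ c s.succ h x := fun x _ => by
            rcases h01 s.succ h x with hh | hh <;> simp [hh]
          exact (Finset.sum_eq_zero_iff_of_nonneg hnn).1 hR0 h3 (mem_Ici.2 hle)
        · exact hsupp _ _ _ hle
      obtain ⟨b2, hb2mem, hb2one, hb2zero⟩ :=
        exists_unique_one (Ici p.2) (c s.succ p.2) (fun a _ => h01 _ _ _) hL
      refine ⟨(p.2, b2), mem_Ici.1 hb2mem, fun h1 h2 => ?_⟩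
      by_cases hc : (h1, h2) = (p.2, b2)
      · obtain ⟨rfl, rfl⟩ := Prod.mk.injEq .. ▸ Prod.ext_iff.1 hc
        rw [if_pos rfl]; exact hb2one
      · rw [if_neg hc]
        by_cases hh1 : h1 = p.2
        · subst hh1
          have hne2 : h2 ≠ b2 := fun q => hc (by rw [q])
          by_cases hmem : p.2 ≤ h2
          · exact hb2zero h2 (mem_Ici.2 hmem) hne2
          · exact hsupp _ _ _ hmem
        · exact hrow0 h1 hh1 h2
  set F : Fin (T+1) → Fin n × Fin n := fun t => Classical.choose (key t) with hF
  have hFle : ∀ t, (F t).1 ≤ (F t).2 := fun t => (Classical.choose_spec (key t)).1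
  have hFchar : ∀ t h1 h2, c t h1 h2 = if (h1, h2) = F t then 1 else 0 :=
    fun t => (Classical.choose_spec (key t)).2
  have hFuniq : ∀ t h1 h2, c t h1 h2 = 1 → (h1, h2) = F t := by
    intro t h1 h2 h
    by_contra hne
    rw [hFchar, if_neg hne] at h
    norm_num at h
  have hF0 : F 0 = (0, 0) := (hFuniq 0 0 0 hinit).symm
  have hstep : ∀ s : Fin T, (F s.succ).1 = (F s.castSucc).2 := by
    intro s
    have hone : ∑ h3 ∈ Ici (F s.castSucc).2, c s.succ (F s.castSucc).2 h3 = 1 := by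
      rw [← hflow s]
      exact rowsum_one _ _ (hFle _) (hFchar _)
    obtain ⟨b2, _, hb2one, _⟩ :=
      exists_unique_one _ _ (fun a _ => h01 _ _ _) hone
    have := hFuniq _ _ _ hb2one
    exact (congrArg Prod.fst this).symm
  refine ⟨fun t => (F t).2, ?_, ?_, ?_⟩
  · rw [Fin.monotone_iff_le_succ]
    intro s
    rw [← hstep s]
    exact hFle _
  · show (F 0).2 = 0
    rw [hF0]
  · intro t h1 h2
    have hprev : (F t).1 = prevH (fun t => (F t).2) 0 t := by
      by_cases ht : (t : ℕ) = 0
      · have : t = 0 := Fin.ext ht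
        subst this
        rw [hF0, prevH]
        simp
      · set s : Fin T := ⟨(t : ℕ) - 1, by have := t.isLt; omega⟩ with hs
        have hts : t = s.succ := Fin.ext (by simp [hs, Fin.val_succ]; omega)
        rw [hts, prevH_succ, hstep s]
    rw [hFchar t h1 h2]
    by_cases hc : (h1, h2) = F t
    · rw [if_pos hc, if_pos ⟨by rw [← hprev]; exact congrArg Prod.fst hc,
        congrArg Prod.snd hc⟩]
    · rw [if_neg hc, if_neg (fun ⟨q1, q2⟩ => hc (Prod.ext (by rw [q1, ← hprev]) q2))]

lemma sum_Iic_ind {n : ℕ} [NeZero n] (a b h : Fin n) (hab : a ≤ b) :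
    ∑ h1 ∈ Iic h, (if h1 = a ∧ h = b then (1:ℝ) else 0) = if h = b then 1 else 0 := by
  by_cases hb : h = b
  · rw [if_pos hb,
      Finset.sum_congr rfl (fun h1 _ => show (if h1 = a ∧ h = b then (1:ℝ) else 0)
        = if h1 = a then 1 else 0 by by_cases h1a : h1 = a <;> simp [h1a, hb]),
      Finset.sum_ite_eq' (Iic h) a, if_pos (mem_Iic.2 (hab.trans hb.ge))]
  · rw [if_neg hb, Finset.sum_eq_zero (fun h1 _ => if_neg (fun q => hb q.2))]

lemma sum_Ici_ind {n : ℕ} [NeZero n] (a b h : Fin n) (hab : a ≤ b) :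
    ∑ h3 ∈ Ici h, (if h = a ∧ h3 = b then (1:ℝ) else 0) = if h = a then 1 else 0 := by
  by_cases ha : h = a
  · rw [if_pos ha,
      Finset.sum_congr rfl (fun h3 _ => show (if h = a ∧ h3 = b then (1:ℝ) else 0)
        = if h3 = b then 1 else 0 by by_cases h3b : h3 = b <;> simp [h3b, ha]),
      Finset.sum_ite_eq' (Ici h) b, if_pos (mem_Ici.2 (ha.le.trans hab))]
  · rw [if_neg ha, Finset.sum_eq_zero (fun h3 _ => if_neg (fun q => ha q.1))]

lemma sum_ind_snd {n m : ℕ} (a : Fin n) (b : Fin m) (h : Fin n) :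
    ∑ g : Fin m, (if h = a ∧ g = b then (1:ℝ) else 0) = if h = a then 1 else 0 := by
  by_cases ha : h = a
  · rw [if_pos ha,
      Finset.sum_congr rfl (fun g _ => show (if h = a ∧ g = b then (1:ℝ) else 0)
        = if g = b then 1 else 0 by by_cases hg : g = b <;> simp [hg, ha]),
      Finset.sum_ite_eq' univ b, if_pos (mem_univ b)]
  · rw [if_neg ha, Finset.sum_eq_zero (fun g _ => if_neg (fun q => ha q.1))]

lemma sum_ind_fst {n m : ℕ} (a : Fin n) (b : Fin m) (g : Fin m) :
    ∑ h : Fin n, (if h = a ∧ g = b then (1:ℝ) else 0) = if g = b then 1 else 0 := by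
  by_cases hb : g = b
  · rw [if_pos hb,
      Finset.sum_congr rfl (fun h _ => show (if h = a ∧ g = b then (1:ℝ) else 0)
        = if h = a then 1 else 0 by by_cases ha : h = a <;> simp [ha, hb]),
      Finset.sum_ite_eq' univ a, if_pos (mem_univ a)]
  · rw [if_neg hb, Finset.sum_eq_zero (fun h _ => if_neg (fun q => hb q.2))]

lemma wsum_tri {n : ℕ} [NeZero n] (C : Fin n → Fin n → ℝ) (a b : Fin n) (hab : a ≤ b) :
    ∑ h2, ∑ h1 ∈ Iic h2, C h1 h2 * (if h1 = a ∧ h2 = b then (1:ℝ) else 0) = C a b := by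
  have inner : ∀ h2 : Fin n, ∑ h1 ∈ Iic h2, C h1 h2 * (if h1 = a ∧ h2 = b then (1:ℝ) else 0)
      = if h2 = b then C a b else 0 := by
    intro h2
    by_cases hb : h2 = b
    · rw [if_pos hb,
        Finset.sum_congr rfl (fun h1 _ => show C h1 h2 * (if h1 = a ∧ h2 = b then (1:ℝ) else 0)
          = if h1 = a then C h1 h2 else 0 by by_cases h1a : h1 = a <;> simp [h1a, hb]),
        Finset.sum_ite_eq' (Iic h2) a, if_pos (mem_Iic.2 (hab.trans hb.ge)), hb]
    · rw [if_neg hb, Finset.sum_eq_zero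
        (fun h1 _ => by rw [if_neg (fun q => hb q.2), mul_zero])]
  rw [Finset.sum_congr rfl (fun h2 _ => inner h2), Finset.sum_ite_eq' univ b,
    if_pos (mem_univ b)]

lemma wsum_full {n m : ℕ} (E : Fin n → Fin m → ℝ) (a : Fin n) (b : Fin m) :
    ∑ h, ∑ g, E h g * (if h = a ∧ g = b then (1:ℝ) else 0) = E a b := by
  have inner : ∀ h : Fin n, ∑ g, E h g * (if h = a ∧ g = b then (1:ℝ) else 0)
      = if h = a then E h b else 0 := by
    intro h
    by_cases ha : h = a
    · rw [if_pos ha,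
        Finset.sum_congr rfl (fun g _ => show E h g * (if h = a ∧ g = b then (1:ℝ) else 0)
          = if g = b then E h g else 0 by by_cases hg : g = b <;> simp [hg, ha]),
        Finset.sum_ite_eq' univ b, if_pos (mem_univ b)]
    · rw [if_neg ha, Finset.sum_eq_zero
        (fun g _ => by rw [if_neg (fun q => ha q.1), mul_zero])]
  rw [Finset.sum_congr rfl (fun h _ => inner h), Finset.sum_ite_eq' univ a,
    if_pos (mem_univ a)]

lemma memQ_profilePoint {T n m : ℕ} {D : Type} [Fintype D] [NeZero n] [NeZero m]
    (hd : D → Fin (T + 1) → Fin n) (hb : Fin (T + 1) → Fin m)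
    (hbm : Monotone hb) (hb0 : hb 0 = 0)
    (hdm : ∀ d, Monotone (hd d)) (hd0 : ∀ d, hd d 0 = 0) :
    memQ (profilePoint hd hb) := by
  have hble := prevH_le hb hbm hb0
  have hdle : ∀ d t, prevH (hd d) 0 t ≤ hd d t := fun d => prevH_le _ (hdm d) (hd0 d)
  refine ⟨?_, ?_, ?_, ?_, ?_, ?_, ?_, ?_, ?_, ?_, ?_, ?_, ?_⟩
  · intro t d h1 h2; dsimp only [profilePoint]; split <;> norm_num
  · intro t g1 g2; dsimp only [profilePoint]; split <;> norm_num
  · intro t d h g; dsimp only [profilePoint]; split <;> norm_num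
  · intro t d h1 h2 hle; dsimp only [profilePoint]
    rw [if_neg]; rintro ⟨rfl, rfl⟩; exact hle (hdle d t)
  · intro t g1 g2 hle; dsimp only [profilePoint]
    rw [if_neg]; rintro ⟨rfl, rfl⟩; exact hle (hble t)
  · intro d; dsimp only [profilePoint]
    rw [if_pos ⟨(prevH_zero _ _).symm, (hd0 d).symm⟩]
  · intro d h1 h2 hpos; dsimp only [profilePoint]
    rw [if_neg]; rintro ⟨-, rfl⟩
    rw [hd0 d] at hpos; exact lt_irrefl _ hpos
  · dsimp only [profilePoint]
    rw [if_pos ⟨(prevH_zero _ _).symm, hb0.symm⟩]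
  · intro g1 g2 hpos; dsimp only [profilePoint]
    rw [if_neg]; rintro ⟨-, rfl⟩
    rw [hb0] at hpos; exact lt_irrefl _ hpos
  · intro t d h; dsimp only [profilePoint]
    rw [sum_Iic_ind _ _ _ (hdle d t.castSucc), sum_Ici_ind _ _ _ (hdle d t.succ),
      prevH_succ]
  · intro t d h; dsimp only [profilePoint]
    rw [sum_Iic_ind _ _ _ (hdle d t), sum_ind_snd]
  · intro t g; dsimp only [profilePoint]
    rw [sum_Iic_ind _ _ _ (hble t.castSucc), sum_Ici_ind _ _ _ (hble t.succ),
      prevH_succ]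
  · intro t d g; dsimp only [profilePoint]
    rw [sum_Iic_ind _ _ _ (hble t), sum_ind_fst]

lemma isIntegral_profilePoint {T n m : ℕ} {D : Type} [NeZero n] [NeZero m]
    (hd : D → Fin (T + 1) → Fin n) (hb : Fin (T + 1) → Fin m) :
    isIntegral (profilePoint hd hb) := by
  refine ⟨?_, ?_, ?_⟩ <;> intros <;> dsimp only [profilePoint] <;> split
  · right; rfl
  · left; rfl
  · right; rfl
  · left; rfl
  · right; rfl
  · left; rfl

lemma obj_profilePoint {T n m : ℕ} {D : Type} [Fintype D] [NeZero n] [NeZero m]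
    (Dcost : Fin (T + 1) → D → Fin n → Fin n → ℝ)
    (Dexp : Fin (T + 1) → D → Fin n → Fin m → ℝ)
    (Bcost : Fin (T + 1) → Fin m → Fin m → ℝ)
    (Bexp : Fin (T + 1) → Fin m → ℝ)
    (hd : D → Fin (T + 1) → Fin n) (hb : Fin (T + 1) → Fin m)
    (hbm : Monotone hb) (hb0 : hb 0 = 0)
    (hdm : ∀ d, Monotone (hd d)) (hd0 : ∀ d, hd d 0 = 0) :
    obj Dcost Dexp Bcost Bexp (profilePoint hd hb)
      = profileCost Dcost Dexp Bcost Bexp hd hb := by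
  have hble := prevH_le hb hbm hb0
  have hdle : ∀ d t, prevH (hd d) 0 t ≤ hd d t := fun d => prevH_le _ (hdm d) (hd0 d)
  unfold obj profileCost
  dsimp only [profilePoint]
  rw [Finset.sum_congr rfl (fun t _ => Finset.sum_congr rfl
      (fun d _ => wsum_tri (Dcost t d) _ _ (hdle d t))),
    Finset.sum_congr rfl (fun t _ => Finset.sum_congr rfl
      (fun d _ => wsum_full (Dexp t d) _ _)),
    Finset.sum_congr rfl (fun t _ =>
      wsum_tri (fun g1 g2 => Bcost t g1 g2 + Bexp t g2) _ _ (hble t)),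
    ← Finset.sum_add_distrib, ← Finset.sum_add_distrib]
  exact Finset.sum_congr rfl fun t _ => by rw [Finset.sum_add_distrib]; ring

lemma main_statement (T n m : ℕ) [NeZero n] [NeZero m]
    (D : Type) [Fintype D]
    (Dcost : Fin (T + 1) → D → Fin n → Fin n → ℝ)
    (Dexp : Fin (T + 1) → D → Fin n → Fin m → ℝ)
    (Bcost : Fin (T + 1) → Fin m → Fin m → ℝ)
    (Bexp : Fin (T + 1) → Fin m → ℝ) :
    ∃ (x : DikePoint T n m D) (hb : Fin (T + 1) → Fin m)
      (hd : D → Fin (T + 1) → Fin n),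
      memQ x ∧ isIntegral x ∧
      Monotone hb ∧ hb 0 = 0 ∧ (∀ d, Monotone (hd d) ∧ hd d 0 = 0) ∧
      (∀ y : DikePoint T n m D, memQ y → isIntegral y →
        obj Dcost Dexp Bcost Bexp x ≤ obj Dcost Dexp Bcost Bexp y) ∧
      (∀ (hb' : Fin (T + 1) → Fin m) (hd' : D → Fin (T + 1) → Fin n),
        Monotone hb' → hb' 0 = 0 → (∀ d, Monotone (hd' d) ∧ hd' d 0 = 0) →
        profileCost Dcost Dexp Bcost Bexp hd hb ≤
          profileCost Dcost Dexp Bcost Bexp hd' hb') ∧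
      obj Dcost Dexp Bcost Bexp x = profileCost Dcost Dexp Bcost Bexp hd hb := by
  classical
  set S : Finset ((Fin (T + 1) → Fin m) × (D → Fin (T + 1) → Fin n)) :=
    univ.filter (fun p => Monotone p.1 ∧ p.1 0 = 0 ∧
      ∀ d, Monotone (p.2 d) ∧ p.2 d 0 = 0) with hSdef
  have hS : S.Nonempty :=
    ⟨(fun _ => 0, fun _ _ => 0), Finset.mem_filter.2
      ⟨Finset.mem_univ _, monotone_const, rfl, fun d => ⟨monotone_const, rfl⟩⟩⟩
  obtain ⟨p, hpS, hpmin⟩ :=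
    S.exists_min_image (fun p => profileCost Dcost Dexp Bcost Bexp p.2 p.1) hS
  obtain ⟨hbm, hb0, hdprop⟩ := (Finset.mem_filter.1 hpS).2
  have hdm : ∀ d, Monotone (p.2 d) := fun d => (hdprop d).1
  have hd0 : ∀ d, p.2 d 0 = 0 := fun d => (hdprop d).2
  refine ⟨profilePoint p.2 p.1, p.1, p.2,
    memQ_profilePoint _ _ hbm hb0 hdm hd0,
    isIntegral_profilePoint _ _, hbm, hb0, hdprop, ?_, ?_,
    obj_profilePoint _ _ _ _ _ _ hbm hb0 hdm hd0⟩
  · -- optimality among integral points of Q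
    intro y hy hyint
    obtain ⟨hQ1, hQ2, hQ3, hQ4, hQ5, hQ6, hQ7, hQ8, hQ9, hQ10, hQ11, hQ12, hQ13⟩ := hy
    obtain ⟨hI1, hI2, hI3⟩ := hyint
    obtain ⟨fb, fbm, fb0, fbchar⟩ := extract y.B hI2 hQ5 hQ8 hQ9 hQ12
    have hdik : ∀ d, ∃ f : Fin (T + 1) → Fin n, Monotone f ∧ f 0 = 0 ∧
        ∀ t h1 h2, y.CY t d h1 h2 = if h1 = prevH f 0 t ∧ h2 = f t then 1 else 0 :=
      fun d => extract (fun t h1 h2 => y.CY t d h1 h2) (fun t => hI1 t d)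
        (fun t h1 h2 => hQ4 t d h1 h2) (hQ6 d) (fun h1 h2 => hQ7 d h1 h2)
        (fun t h => hQ10 t d h)
    choose fd fdm fd0 fdchar using hdik
    have hfble := prevH_le fb fbm fb0
    have hfdle : ∀ d t, prevH (fd d) 0 t ≤ fd d t :=
      fun d => prevH_le _ (fdm d) (fd0 d)
    -- characterize DY
    have hDY0g : ∀ t d h g, g ≠ fb t → y.DY t d h g = 0 := by
      intro t d h g hg
      have hsum : ∑ h' : Fin n, y.DY t d h' g = 0 := by
        rw [← hQ13 t d g, Finset.sum_congr rfl (fun g1 _ => fbchar t g1 g),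
          sum_Iic_ind _ _ _ (hfble t), if_neg hg]
      exact (Finset.sum_eq_zero_iff_of_nonneg
        (fun h' _ => (hQ3 t d h' g).1)).1 hsum h (mem_univ h)
    have hDY0h : ∀ t d h g, h ≠ fd d t → y.DY t d h g = 0 := by
      intro t d h g hh
      have hsum : ∑ g' : Fin m, y.DY t d h g' = 0 := by
        rw [← hQ11 t d h, Finset.sum_congr rfl (fun h1 _ => fdchar d t h1 h),
          sum_Iic_ind _ _ _ (hfdle d t), if_neg hh]
      exact (Finset.sum_eq_zero_iff_of_nonneg
        (fun g' _ => (hQ3 t d h g').1)).1 hsum g (mem_univ g)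
    have hDY1 : ∀ t d, y.DY t d (fd d t) (fb t) = 1 := by
      intro t d
      have hsum : ∑ g' : Fin m, y.DY t d (fd d t) g' = 1 := by
        rw [← hQ11 t d (fd d t),
          Finset.sum_congr rfl (fun h1 _ => fdchar d t h1 (fd d t)),
          sum_Iic_ind _ _ _ (hfdle d t), if_pos rfl]
      have hsplit : ∑ g' : Fin m, y.DY t d (fd d t) g'
          = y.DY t d (fd d t) (fb t) := by
        rw [← Finset.add_sum_erase univ _ (mem_univ (fb t)),
          Finset.sum_eq_zero (fun g' hg' =>
            hDY0g t d (fd d t) g' (Finset.mem_erase.1 hg').1), add_zero]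
      rw [← hsplit, hsum]
    have hDY : ∀ t d h g, y.DY t d h g
        = if h = fd d t ∧ g = fb t then 1 else 0 := by
      intro t d h g
      by_cases hc : h = fd d t ∧ g = fb t
      · rw [if_pos hc, hc.1, hc.2, hDY1]
      · rw [if_neg hc]
        rcases not_and_or.1 hc with hh | hg
        · exact hDY0h t d h g hh
        · exact hDY0g t d h g hg
    have hy_eq : y = profilePoint fd fb := by
      obtain ⟨CY, B, DY⟩ := y
      simp only [profilePoint, DikePoint.mk.injEq]
      refine ⟨?_, ?_, ?_⟩
      · funext t d h1 h2; exact fdchar d t h1 h2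
      · funext t g1 g2; exact fbchar t g1 g2
      · funext t d h g; exact hDY t d h g
    rw [hy_eq, obj_profilePoint _ _ _ _ _ _ fbm fb0 fdm fd0,
      obj_profilePoint _ _ _ _ _ _ hbm hb0 hdm hd0]
    exact hpmin (fb, fd) (Finset.mem_filter.2
      ⟨Finset.mem_univ _, fbm, fb0, fun d => ⟨fdm d, fd0 d⟩⟩)
  · intro hb' hd' h1 h2 h3
    exact hpmin (hb', hd') (Finset.mem_filter.2 ⟨Finset.mem_univ _, h1, h2, h3⟩)

end Aux

/-- equivalence of the IP model and the height-profile
reformulation: both minima are attained, and the minimum of the objective over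
integral points of `Q` equals the minimum of the profile cost over all pairs of
a barrier height profile and a family of dike height profiles. -/
theorem statement_12 (T n m : ℕ) (hT : 1 ≤ T) [NeZero n] [NeZero m]
    (D : Type) [Fintype D] [Nonempty D]
    (Dcost : Fin (T + 1) → D → Fin n → Fin n → ℝ)
    (Dexp : Fin (T + 1) → D → Fin n → Fin m → ℝ)
    (Bcost : Fin (T + 1) → Fin m → Fin m → ℝ)
    (Bexp : Fin (T + 1) → Fin m → ℝ)
    (hDcost : ∀ t d h1 h2, h1 ≤ h2 → 0 ≤ Dcost t d h1 h2)
    (hDexp : ∀ t d h g, 0 ≤ Dexp t d h g)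
    (hBcost : ∀ t g1 g2, g1 ≤ g2 → 0 ≤ Bcost t g1 g2)
    (hBexp : ∀ t g, 0 ≤ Bexp t g) :
    ∃ (x : DikePoint T n m D) (hb : Fin (T + 1) → Fin m)
      (hd : D → Fin (T + 1) → Fin n),
      memQ x ∧ isIntegral x ∧
      Monotone hb ∧ hb 0 = 0 ∧ (∀ d, Monotone (hd d) ∧ hd d 0 = 0) ∧
      (∀ y : DikePoint T n m D, memQ y → isIntegral y →
        obj Dcost Dexp Bcost Bexp x ≤ obj Dcost Dexp Bcost Bexp y) ∧
      (∀ (hb' : Fin (T + 1) → Fin m) (hd' : D → Fin (T + 1) → Fin n),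
        Monotone hb' → hb' 0 = 0 → (∀ d, Monotone (hd' d) ∧ hd' d 0 = 0) →
        profileCost Dcost Dexp Bcost Bexp hd hb ≤
          profileCost Dcost Dexp Bcost Bexp hd' hb') ∧
      obj Dcost Dexp Bcost Bexp x = profileCost Dcost Dexp Bcost Bexp hd hb := by
  exact main_statement T n m D Dcost Dexp Bcost Bexp
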